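/- Let Δ be the maximum degree of H̄, let i ≥ 0 be an integer with dn ≥ 2i + 8d, and let G be a d-regular simple graph on V with exactly i red edges. Then the number b(G) of 6-tuples valid for an inverse 3-edge switching on G satisfies (2|E(H̄)|−2i)·d²·(dn−2i−8d) − 4|E(H̄)|·d³·(d+Δ) − 4iΔd²n ≤ b(G) ≤ 2|E(H̄)|·d³·n. -/

import Mathlib

open SimpleGraph
open scoped Classical

section CountingHelpers

open Finset

variable {V : Type*} [Fintype V]

/-- Cardinality of the set of vertices satisfying a predicate, with a pinned
(classical) decidability instance. -/
private noncomputable def fcard (p : V → Prop) : ℕ := (univ.filter p).card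

private lemma fcard_congr {p q : V → Prop} (h : ∀ x, p x ↔ q x) : fcard p = fcard q := by
  unfold fcard
  congr 1
  ext x
  simp only [Finset.mem_filter, Finset.mem_univ, true_and]
  exact h x

private lemma stepone_le {p : V → Prop} {F : V → ℕ} {m C : ℕ}
    (hcard : fcard p ≤ m) (hF : ∀ x, p x → F x ≤ C)
    (hF0 : ∀ x, ¬ p x → F x = 0) :
    ∑ x, F x ≤ m * C := by
  unfold fcard at hcard
  calc ∑ x, F x = ∑ x, if p x then F x else 0 :=
        Finset.sum_congr rfl fun x _ => by by_cases h : p x <;> simp [h, hF0]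
    _ = ∑ x ∈ univ.filter p, F x := (Finset.sum_filter _ _).symm
    _ ≤ ∑ _x ∈ univ.filter p, C := Finset.sum_le_sum fun x hx => hF x (Finset.mem_filter.mp hx).2
    _ = (univ.filter p).card * C := by rw [Finset.sum_const, smul_eq_mul]
    _ ≤ m * C := Nat.mul_le_mul_right _ hcard

private lemma stepone_eq {p : V → Prop} {F : V → ℕ} {m C : ℕ}
    (hcard : fcard p = m) (hF : ∀ x, p x → F x = C)
    (hF0 : ∀ x, ¬ p x → F x = 0) :
    ∑ x, F x = m * C := by
  unfold fcard at hcard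
  calc ∑ x, F x = ∑ x, if p x then F x else 0 :=
        Finset.sum_congr rfl fun x _ => by by_cases h : p x <;> simp [h, hF0]
    _ = ∑ x ∈ univ.filter p, F x := (Finset.sum_filter _ _).symm
    _ = ∑ _x ∈ univ.filter p, C := Finset.sum_congr rfl fun x hx => hF x (Finset.mem_filter.mp hx).2
    _ = m * C := by rw [Finset.sum_const, smul_eq_mul, hcard]

private lemma stepfree_le {F : V → ℕ} {C : ℕ} (hF : ∀ x, F x ≤ C) :
    ∑ x, F x ≤ Fintype.card V * C := by
  calc ∑ x, F x ≤ ∑ _x : V, C := Finset.sum_le_sum fun x _ => hF x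
    _ = Fintype.card V * C := by rw [Finset.sum_const, smul_eq_mul, Finset.card_univ]

private lemma stepfree_eq {F : V → ℕ} {C : ℕ} (hF : ∀ x, F x = C) :
    ∑ x, F x = Fintype.card V * C := by
  calc ∑ x, F x = ∑ _x : V, C := Finset.sum_congr rfl fun x _ => hF x
    _ = Fintype.card V * C := by rw [Finset.sum_const, smul_eq_mul, Finset.card_univ]

private lemma steppair_le {p : V → V → Prop} {F : V → V → ℕ} {S C : ℕ}
    (hcard : ∑ a, fcard (p a) = S)
    (hF : ∀ a b, p a b → F a b ≤ C) (hF0 : ∀ a b, ¬ p a b → F a b = 0) :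
    ∑ a, ∑ b, F a b ≤ S * C := by
  calc ∑ a, ∑ b, F a b ≤ ∑ a, fcard (p a) * C :=
        Finset.sum_le_sum fun a _ => stepone_le le_rfl (hF a) (hF0 a)
    _ = S * C := by rw [← Finset.sum_mul, hcard]

private lemma steppair_eq {p : V → V → Prop} {F : V → V → ℕ} {S C : ℕ}
    (hcard : ∑ a, fcard (p a) = S)
    (hF : ∀ a b, p a b → F a b = C) (hF0 : ∀ a b, ¬ p a b → F a b = 0) :
    ∑ a, ∑ b, F a b = S * C := by
  calc ∑ a, ∑ b, F a b = ∑ a, fcard (p a) * C :=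
        Finset.sum_congr rfl fun a _ => stepone_eq rfl (hF a) (hF0 a)
    _ = S * C := by rw [← Finset.sum_mul, hcard]

private lemma fcard_adj (K : SimpleGraph V) (a : V) [Fintype (K.neighborSet a)] :
    fcard (fun x => K.Adj a x) = K.degree a := by
  have h : Finset.univ.filter (fun x => K.Adj a x) = K.neighborFinset a := by
    ext x
    simp only [Finset.mem_filter, Finset.mem_univ, true_and, SimpleGraph.mem_neighborFinset]
  calc fcard (fun x => K.Adj a x) = (K.neighborFinset a).card := by unfold fcard; rw [h]
    _ = K.degree a := rfl

private lemma fcard_adj_le_max (K : SimpleGraph V) [DecidableRel K.Adj] (a : V) :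
    fcard (fun x => K.Adj a x) ≤ K.maxDegree := by
  rw [fcard_adj K a]
  exact SimpleGraph.degree_le_maxDegree K a

private lemma fcard_pairsum (K : SimpleGraph V) [DecidableRel K.Adj] :
    ∑ a, fcard (fun x => K.Adj a x) = 2 * K.edgeSet.ncard := by
  calc ∑ a, fcard (fun x => K.Adj a x) = ∑ a, K.degree a :=
        Finset.sum_congr rfl fun a _ => fcard_adj K a
    _ = 2 * K.edgeFinset.card := SimpleGraph.sum_degrees_eq_twice_card_edges K
    _ = 2 * K.edgeSet.ncard := by
        congr 1
        exact (Set.ncard_eq_toFinset_card' _).symm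

private lemma fcard_split (p q : V → Prop) :
    fcard (fun x => p x ∧ q x) + fcard (fun x => p x ∧ ¬ q x) = fcard p := by
  unfold fcard
  have h := Finset.card_filter_add_card_filter_not
    (s := (univ : Finset V).filter p) (p := q)
  rw [Finset.filter_filter, Finset.filter_filter] at h
  convert h using 2 <;>
    · congr 1
      ext y
      simp only [Finset.mem_filter]

private lemma fcard_split_graphs (H G : SimpleGraph V) (a : V) :
    fcard (fun x => (G ⊓ Hᶜ).Adj a x) + fcard (fun x => (Hᶜ \ G).Adj a x)
      = fcard (fun x => Hᶜ.Adj a x) := by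
  have e1 : fcard (fun x => (G ⊓ Hᶜ).Adj a x)
      = fcard (fun x => Hᶜ.Adj a x ∧ G.Adj a x) :=
    fcard_congr fun x => by rw [SimpleGraph.inf_adj]; tauto
  have e2 : fcard (fun x => (Hᶜ \ G).Adj a x)
      = fcard (fun x => Hᶜ.Adj a x ∧ ¬ G.Adj a x) :=
    fcard_congr fun x => by rw [SimpleGraph.sdiff_adj]
  rw [e1, e2]
  exact fcard_split _ _

private lemma fcard_mem4_le (b0 b1 b2 b3 : V) [DecidableEq V] :
    fcard (fun x => x = b0 ∨ x = b1 ∨ x = b2 ∨ x = b3) ≤ 4 := by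
  unfold fcard
  refine le_trans (Finset.card_le_card (t := ({b0, b1, b2, b3} : Finset V)) ?_) ?_
  · intro x hx
    simp only [Finset.mem_filter] at hx
    simp only [Finset.mem_insert, Finset.mem_singleton]
    tauto
  · apply le_trans (Finset.card_insert_le _ _)
    apply Nat.succ_le_succ
    apply le_trans (Finset.card_insert_le _ _)
    apply Nat.succ_le_succ
    apply le_trans (Finset.card_insert_le _ _)
    apply Nat.succ_le_succ
    simp

private lemma rot3 (g : V → V → V → ℕ) :
    ∑ a, ∑ b, ∑ c, g a b c = ∑ b, ∑ c, ∑ a, g a b c := by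
  rw [Finset.sum_comm]
  exact Finset.sum_congr rfl fun b _ => Finset.sum_comm

private lemma rev3 (g : V → V → V → ℕ) :
    ∑ a, ∑ b, ∑ c, g a b c = ∑ c, ∑ b, ∑ a, g a b c := by
  calc ∑ a, ∑ b, ∑ c, g a b c = ∑ b, ∑ a, ∑ c, g a b c := Finset.sum_comm
    _ = ∑ b, ∑ c, ∑ a, g a b c := Finset.sum_congr rfl fun b _ => Finset.sum_comm
    _ = ∑ c, ∑ b, ∑ a, g a b c := Finset.sum_comm

private lemma mf3 (g : V → V → V → ℕ) :
    ∑ a, ∑ b, ∑ c, g a b c = ∑ c, ∑ a, ∑ b, g a b c := by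
  calc ∑ a, ∑ b, ∑ c, g a b c = ∑ a, ∑ c, ∑ b, g a b c :=
        Finset.sum_congr rfl fun a _ => Finset.sum_comm
    _ = ∑ c, ∑ a, ∑ b, g a b c := Finset.sum_comm

private lemma mf4 (g : V → V → V → V → ℕ) :
    ∑ a, ∑ b, ∑ c, ∑ d, g a b c d = ∑ d, ∑ a, ∑ b, ∑ c, g a b c d := by
  calc ∑ a, ∑ b, ∑ c, ∑ d, g a b c d = ∑ a, ∑ d, ∑ b, ∑ c, g a b c d :=
        Finset.sum_congr rfl fun a _ => mf3 _
    _ = ∑ d, ∑ a, ∑ b, ∑ c, g a b c d := Finset.sum_comm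

private lemma mf5 (g : V → V → V → V → V → ℕ) :
    ∑ a, ∑ b, ∑ c, ∑ d, ∑ e, g a b c d e = ∑ e, ∑ a, ∑ b, ∑ c, ∑ d, g a b c d e := by
  calc ∑ a, ∑ b, ∑ c, ∑ d, ∑ e, g a b c d e = ∑ a, ∑ e, ∑ b, ∑ c, ∑ d, g a b c d e :=
        Finset.sum_congr rfl fun a _ => mf4 _
    _ = ∑ e, ∑ a, ∑ b, ∑ c, ∑ d, g a b c d e := Finset.sum_comm

end CountingHelpers

/-- A 6-tuple `(v0,…,v5)` is valid for an inverse 3-edge switching on `G` (host graph `H`):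
`v0v1` is a red non-edge of `G`; `v0v5`, `v1v2`, `v3v4` are black edges of `G`;
`v2v3`, `v4v5` are black non-edges of `G`; vertices distinct except `v2 = v5` allowed. -/
def Valid3Inverse {n : ℕ} (H G : SimpleGraph (Fin n))
    (v0 v1 v2 v3 v4 v5 : Fin n) : Prop :=
  (¬ G.Adj v0 v1 ∧ Hᶜ.Adj v0 v1) ∧
  (G.Adj v0 v5 ∧ H.Adj v0 v5) ∧
  (G.Adj v1 v2 ∧ H.Adj v1 v2) ∧
  (G.Adj v3 v4 ∧ H.Adj v3 v4) ∧
  (¬ G.Adj v2 v3 ∧ H.Adj v2 v3) ∧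
  (¬ G.Adj v4 v5 ∧ H.Adj v4 v5) ∧
  List.Pairwise (· ≠ ·) [v0, v1, v3, v4] ∧
  (∀ x ∈ [v0, v1, v3, v4], v2 ≠ x ∧ v5 ≠ x)

/-- `b(G)`: the number of 6-tuples valid for an inverse 3-edge switching on `G`. -/
noncomputable def b3 {n : ℕ} (H G : SimpleGraph (Fin n)) : ℕ :=
  Nat.card {v : Fin 6 → Fin n //
    Valid3Inverse H G (v 0) (v 1) (v 2) (v 3) (v 4) (v 5)}

/-- The frame of an inverse 3-edge switching tuple. -/
private abbrev FrameP {n : ℕ} (H G : SimpleGraph (Fin n)) (v0 v1 v2 v3 v4 v5 : Fin n) : Prop :=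
  (Hᶜ \ G).Adj v0 v1 ∧ G.Adj v0 v5 ∧ G.Adj v1 v2 ∧ G.Adj v3 v4

private lemma b3_eq {n : ℕ} (H G : SimpleGraph (Fin n)) :
    b3 H G = ∑ v0, ∑ v1, ∑ v2, ∑ v3, ∑ v4, ∑ v5,
      (if Valid3Inverse H G v0 v1 v2 v3 v4 v5 then 1 else 0) := by
  have h1 : b3 H G = (Finset.univ.filter (fun v : Fin 6 → Fin n =>
      Valid3Inverse H G (v 0) (v 1) (v 2) (v 3) (v 4) (v 5))).card := by
    rw [b3, Nat.card_eq_fintype_card, Fintype.card_subtype]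
  have h2 : ∑ v0, ∑ v1, ∑ v2, ∑ v3, ∑ v4, ∑ v5,
      (if Valid3Inverse H G v0 v1 v2 v3 v4 v5 then 1 else 0) =
      ((Finset.univ : Finset (Fin n × Fin n × Fin n × Fin n × Fin n × Fin n)).filter
        (fun t => Valid3Inverse H G t.1 t.2.1 t.2.2.1 t.2.2.2.1 t.2.2.2.2.1 t.2.2.2.2.2)).card := by
    rw [Finset.card_filter]
    simp only [Fintype.sum_prod_type]
  rw [h1, h2]
  apply Finset.card_bij (fun v _ => (v 0, v 1, v 2, v 3, v 4, v 5))
  · intro v hv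
    simp only [Finset.mem_filter, Finset.mem_univ, true_and] at hv ⊢
    exact hv
  · intro v hv w hw h
    simp only [Prod.mk.injEq] at h
    funext x
    fin_cases x <;> tauto
  · intro t ht
    simp only [Finset.mem_filter, Finset.mem_univ, true_and] at ht
    refine ⟨![t.1, t.2.1, t.2.2.1, t.2.2.2.1, t.2.2.2.2.1, t.2.2.2.2.2], ?_, ?_⟩
    · simp only [Finset.mem_filter, Finset.mem_univ, true_and]
      convert ht using 2 <;> rfl
    · rfl

private lemma cover {n : ℕ} (H G : SimpleGraph (Fin n)) (v0 v1 v2 v3 v4 v5 : Fin n)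
    (hf : FrameP H G v0 v1 v2 v3 v4 v5) :
    Valid3Inverse H G v0 v1 v2 v3 v4 v5 ∨
    (FrameP H G v0 v1 v2 v3 v4 v5 ∧ (G ⊓ Hᶜ).Adj v3 v4) ∨
    (FrameP H G v0 v1 v2 v3 v4 v5 ∧ (v3 = v0 ∨ v3 = v1 ∨ v3 = v2 ∨ v3 = v5)) ∨
    (FrameP H G v0 v1 v2 v3 v4 v5 ∧ (v4 = v0 ∨ v4 = v1 ∨ v4 = v2 ∨ v4 = v5)) ∨
    (FrameP H G v0 v1 v2 v3 v4 v5 ∧ G.Adj v2 v3) ∨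
    (FrameP H G v0 v1 v2 v3 v4 v5 ∧ Hᶜ.Adj v2 v3) ∨
    (FrameP H G v0 v1 v2 v3 v4 v5 ∧ G.Adj v4 v5) ∨
    (FrameP H G v0 v1 v2 v3 v4 v5 ∧ Hᶜ.Adj v4 v5) ∨
    (FrameP H G v0 v1 v2 v3 v4 v5 ∧ (G ⊓ Hᶜ).Adj v0 v5) ∨
    (FrameP H G v0 v1 v2 v3 v4 v5 ∧ (G ⊓ Hᶜ).Adj v1 v2) := by
  by_cases b1 : (G ⊓ Hᶜ).Adj v3 v4
  · exact Or.inr (Or.inl ⟨hf, b1⟩)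
  by_cases b2 : v3 = v0 ∨ v3 = v1 ∨ v3 = v2 ∨ v3 = v5
  · exact Or.inr (Or.inr (Or.inl ⟨hf, b2⟩))
  by_cases b3 : v4 = v0 ∨ v4 = v1 ∨ v4 = v2 ∨ v4 = v5
  · exact Or.inr (Or.inr (Or.inr (Or.inl ⟨hf, b3⟩)))
  by_cases b4 : G.Adj v2 v3
  · exact Or.inr (Or.inr (Or.inr (Or.inr (Or.inl ⟨hf, b4⟩))))
  by_cases b5 : Hᶜ.Adj v2 v3
  · exact Or.inr (Or.inr (Or.inr (Or.inr (Or.inr (Or.inl ⟨hf, b5⟩)))))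
  by_cases b6 : G.Adj v4 v5
  · exact Or.inr (Or.inr (Or.inr (Or.inr (Or.inr (Or.inr (Or.inl ⟨hf, b6⟩))))))
  by_cases b7 : Hᶜ.Adj v4 v5
  · exact Or.inr (Or.inr (Or.inr (Or.inr (Or.inr (Or.inr (Or.inr (Or.inl ⟨hf, b7⟩)))))))
  by_cases b8 : (G ⊓ Hᶜ).Adj v0 v5
  · exact Or.inr (Or.inr (Or.inr (Or.inr (Or.inr (Or.inr (Or.inr (Or.inr (Or.inl ⟨hf, b8⟩))))))))
  by_cases b9 : (G ⊓ Hᶜ).Adj v1 v2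
  · exact Or.inr (Or.inr (Or.inr (Or.inr (Or.inr (Or.inr (Or.inr (Or.inr (Or.inr ⟨hf, b9⟩))))))))
  left
  obtain ⟨hA, h05, h12, h34⟩ := hf
  rw [SimpleGraph.sdiff_adj] at hA
  obtain ⟨hH01, hG01⟩ := hA
  push_neg at b2 b3
  obtain ⟨b3a, b3b, b3c, b3d⟩ := b3
  obtain ⟨b2a, b2b, b2c, b2d⟩ := b2
  have hb05 : H.Adj v0 v5 := by
    by_contra hc
    exact b8 ⟨h05, (SimpleGraph.compl_adj H v0 v5).mpr ⟨h05.ne, hc⟩⟩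
  have hb12 : H.Adj v1 v2 := by
    by_contra hc
    exact b9 ⟨h12, (SimpleGraph.compl_adj H v1 v2).mpr ⟨h12.ne, hc⟩⟩
  have hb34 : H.Adj v3 v4 := by
    by_contra hc
    exact b1 ⟨h34, (SimpleGraph.compl_adj H v3 v4).mpr ⟨h34.ne, hc⟩⟩
  have hb23 : H.Adj v2 v3 := by
    by_contra hc
    have hne : v2 ≠ v3 := fun he => b2c he.symm
    exact b5 ((SimpleGraph.compl_adj H v2 v3).mpr ⟨hne, hc⟩)
  have hb45 : H.Adj v4 v5 := by
    by_contra hc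
    have hne : v4 ≠ v5 := b3d
    exact b7 ((SimpleGraph.compl_adj H v4 v5).mpr ⟨hne, hc⟩)
  have h20 : v2 ≠ v0 := fun he => hG01 (by rw [he] at h12; exact h12.symm)
  have h21 : v2 ≠ v1 := fun he => (G.irrefl (by rwa [he] at h12))
  have h51 : v5 ≠ v1 := fun he => hG01 (by rwa [he] at h05)
  have h50 : v5 ≠ v0 := fun he => G.irrefl (by rwa [he] at h05)
  refine ⟨⟨hG01, hH01⟩, ⟨h05, hb05⟩, ⟨h12, hb12⟩, ⟨h34, hb34⟩, ⟨b4, hb23⟩, ⟨b6, hb45⟩, ?_, ?_⟩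
  · rw [List.pairwise_cons, List.pairwise_cons, List.pairwise_cons, List.pairwise_cons]
    refine ⟨?_, ?_, ?_, fun x hx => absurd hx List.not_mem_nil, List.Pairwise.nil⟩
    · intro x hx
      simp only [List.mem_cons, List.not_mem_nil, or_false] at hx
      rcases hx with rfl | rfl | rfl
      · exact hH01.ne
      · exact fun he => b2a he.symm
      · exact fun he => b3a he.symm
    · intro x hx
      simp only [List.mem_cons, List.not_mem_nil, or_false] at hx
      rcases hx with rfl | rfl
      · exact fun he => b2b he.symm
      · exact fun he => b3b he.symm
    · intro x hx
      simp only [List.mem_cons, List.not_mem_nil, or_false] at hx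
      rcases hx with rfl
      exact h34.ne
  · intro x hx
    simp only [List.mem_cons, List.not_mem_nil, or_false] at hx
    rcases hx with rfl | rfl | rfl | rfl
    · exact ⟨h20, h50⟩
    · exact ⟨h21, h51⟩
    · exact ⟨fun he => b2c he.symm, fun he => b2d he.symm⟩
    · exact ⟨fun he => b3c he.symm, fun he => b3d he.symm⟩


private noncomputable def cnt6 {n : ℕ} (P : Fin n → Fin n → Fin n → Fin n → Fin n → Fin n → Prop) : ℕ :=
  ∑ v0, ∑ v1, ∑ v2, ∑ v3, ∑ v4, ∑ v5, if P v0 v1 v2 v3 v4 v5 then 1 else 0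

set_option maxHeartbeats 1000000 in
private lemma b3_eq' {n : ℕ} (H G : SimpleGraph (Fin n)) :
    b3 H G = cnt6 (Valid3Inverse H G) := b3_eq H G

set_option maxHeartbeats 4000000 in
/-- backward-count bounds of Lemma 3. If `G` is `d`-regular with exactly
`i` red edges and `dn ≥ 2i + 8d`, then
`(2|E(Hᶜ)|−2i)d²(dn−2i−8d) − 4|E(Hᶜ)|d³(d+Δ) − 4iΔd²n ≤ b(G) ≤ 2|E(Hᶜ)|d³n`. -/
theorem stmt_5 (n d i : ℕ) (hn : 0 < n) (hd : 0 < d)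
    (H : SimpleGraph (Fin n)) (hdn : 2 * i + 8 * d ≤ d * n)
    (G : SimpleGraph (Fin n)) (hreg : G.IsRegularOfDegree d)
    (hred : (G ⊓ Hᶜ).edgeSet.ncard = i) :
    ((2 * Hᶜ.edgeSet.ncard - 2 * i) * d ^ 2 * (d * n - 2 * i - 8 * d)
        - 4 * Hᶜ.edgeSet.ncard * d ^ 3 * (d + Hᶜ.maxDegree)
        - 4 * i * Hᶜ.maxDegree * d ^ 2 * n : ℤ) ≤ (b3 H G : ℤ) ∧
      (b3 H G : ℤ) ≤ 2 * Hᶜ.edgeSet.ncard * d ^ 3 * n := by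
  have cG : ∀ a : Fin n, fcard (fun x => G.Adj a x) = d :=
    fun a => (fcard_adj G a).trans (hreg a)
  have cG' : ∀ a : Fin n, fcard (fun x => G.Adj x a) = d :=
    fun a => (fcard_congr fun x => G.adj_comm x a).trans (cG a)
  have cH : ∀ a : Fin n, fcard (fun x => Hᶜ.Adj a x) ≤ Hᶜ.maxDegree :=
    fun a => fcard_adj_le_max Hᶜ a
  have cH' : ∀ a : Fin n, fcard (fun x => Hᶜ.Adj x a) ≤ Hᶜ.maxDegree :=
    fun a => le_of_eq_of_le (fcard_congr fun x => Hᶜ.adj_comm x a) (cH a)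
  have sH : ∑ a : Fin n, fcard (fun x => Hᶜ.Adj a x) = 2 * Hᶜ.edgeSet.ncard :=
    fcard_pairsum Hᶜ
  have sR : ∑ a : Fin n, fcard (fun x => (G ⊓ Hᶜ).Adj a x) = 2 * i := by
    rw [fcard_pairsum (G ⊓ Hᶜ), hred]
  obtain ⟨SA, hSAsum⟩ : ∃ S, ∑ a : Fin n, fcard (fun x => (Hᶜ \ G).Adj a x) = S := ⟨_, rfl⟩
  have hSA : 2 * i + SA = 2 * Hᶜ.edgeSet.ncard := by
    rw [← sR, ← hSAsum, ← Finset.sum_add_distrib, ← sH]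
    exact Finset.sum_congr rfl fun a _ => fcard_split_graphs H G a
  -- upper bound count
  have hupper : cnt6 (Valid3Inverse H G) ≤
      (2 * Hᶜ.edgeSet.ncard) * (d * (Fintype.card (Fin n) * (d * (d * 1)))) := by
    simp only [cnt6]
    refine steppair_le sH (fun v0 v1 h01 => ?_) (fun v0 v1 h01 => ?_)
    · refine stepone_le (cG v1).le (fun v2 h12 => ?_) (fun v2 h12 => ?_)
      · refine stepfree_le (fun v3 => ?_)
        refine stepone_le (cG v3).le (fun v4 h34 => ?_) (fun v4 h34 => ?_)
        · refine stepone_le (cG v0).le (fun v5 h05 => ?_) (fun v5 h05 => ?_)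
          · split_ifs <;> omega
          · exact if_neg (fun hv => h05 hv.2.1.1)
        · exact Finset.sum_eq_zero fun v5 _ => if_neg (fun hv => h34 hv.2.2.2.1.1)
      · exact Finset.sum_eq_zero fun v3 _ => Finset.sum_eq_zero fun v4 _ =>
          Finset.sum_eq_zero fun v5 _ => if_neg (fun hv => h12 hv.2.2.1.1)
    · exact Finset.sum_eq_zero fun v2 _ => Finset.sum_eq_zero fun v3 _ =>
        Finset.sum_eq_zero fun v4 _ => Finset.sum_eq_zero fun v5 _ =>
          if_neg (fun hv => h01 hv.1.2)
  -- frame count (exact)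
  have hframe : cnt6 (FrameP H G) = SA * (d * (Fintype.card (Fin n) * (d * (d * 1)))) := by
    simp only [cnt6]
    refine steppair_eq hSAsum (fun v0 v1 h01 => ?_) (fun v0 v1 h01 => ?_)
    · refine stepone_eq (cG v1) (fun v2 h12 => ?_) (fun v2 h12 => ?_)
      · refine stepfree_eq (fun v3 => ?_)
        refine stepone_eq (cG v3) (fun v4 h34 => ?_) (fun v4 h34 => ?_)
        · refine stepone_eq (cG v0) (fun v5 h05 => ?_) (fun v5 h05 => ?_)
          · exact if_pos ⟨h01, h05, h12, h34⟩
          · exact if_neg (fun hv => h05 hv.2.1)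
        · exact Finset.sum_eq_zero fun v5 _ => if_neg (fun hv => h34 hv.2.2.2)
      · exact Finset.sum_eq_zero fun v3 _ => Finset.sum_eq_zero fun v4 _ =>
          Finset.sum_eq_zero fun v5 _ => if_neg (fun hv => h12 hv.2.2.1)
    · exact Finset.sum_eq_zero fun v2 _ => Finset.sum_eq_zero fun v3 _ =>
        Finset.sum_eq_zero fun v4 _ => Finset.sum_eq_zero fun v5 _ =>
          if_neg (fun hv => h01 hv.1)
  -- bad set 1 : v3v4 is a red edge of G
  have hB1 : cnt6 (fun v0 v1 v2 v3 v4 v5 =>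
        FrameP H G v0 v1 v2 v3 v4 v5 ∧ (G ⊓ Hᶜ).Adj v3 v4) ≤
      SA * (d * ((2 * i) * (d * 1))) := by
    simp only [cnt6]
    refine steppair_le hSAsum (fun v0 v1 h01 => ?_) (fun v0 v1 h01 => ?_)
    · refine stepone_le (cG v1).le (fun v2 h12 => ?_) (fun v2 h12 => ?_)
      · refine steppair_le sR (fun v3 v4 h34 => ?_) (fun v3 v4 h34 => ?_)
        · refine stepone_le (cG v0).le (fun v5 h05 => ?_) (fun v5 h05 => ?_)
          · split_ifs <;> omega
          · exact if_neg (fun hv => h05 hv.1.2.1)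
        · exact Finset.sum_eq_zero fun v5 _ => if_neg (fun hv => h34 hv.2)
      · exact Finset.sum_eq_zero fun v3 _ => Finset.sum_eq_zero fun v4 _ =>
          Finset.sum_eq_zero fun v5 _ => if_neg (fun hv => h12 hv.1.2.2.1)
    · exact Finset.sum_eq_zero fun v2 _ => Finset.sum_eq_zero fun v3 _ =>
        Finset.sum_eq_zero fun v4 _ => Finset.sum_eq_zero fun v5 _ =>
          if_neg (fun hv => h01 hv.1.1)
  -- bad set 2 : v3 coincides with v0, v1, v2 or v5
  have hB2 : cnt6 (fun v0 v1 v2 v3 v4 v5 =>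
        FrameP H G v0 v1 v2 v3 v4 v5 ∧ (v3 = v0 ∨ v3 = v1 ∨ v3 = v2 ∨ v3 = v5)) ≤
      SA * (d * (d * (4 * (d * 1)))) := by
    simp only [cnt6]
    rw [Finset.sum_congr rfl fun v0 _ => Finset.sum_congr rfl fun v1 _ =>
      Finset.sum_congr rfl fun v2 _ => mf3 _]
    refine steppair_le hSAsum (fun v0 v1 h01 => ?_) (fun v0 v1 h01 => ?_)
    · refine stepone_le (cG v1).le (fun v2 h12 => ?_) (fun v2 h12 => ?_)
      · refine stepone_le (cG v0).le (fun v5 h05 => ?_) (fun v5 h05 => ?_)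
        · refine stepone_le (fcard_mem4_le v0 v1 v2 v5) (fun v3 h3m => ?_)
            (fun v3 h3m => ?_)
          · refine stepone_le (cG v3).le (fun v4 h34 => ?_) (fun v4 h34 => ?_)
            · split_ifs <;> omega
            · exact if_neg (fun hv => h34 hv.1.2.2.2)
          · exact Finset.sum_eq_zero fun v4 _ => if_neg (fun hv => h3m hv.2)
        · exact Finset.sum_eq_zero fun v3 _ => Finset.sum_eq_zero fun v4 _ =>
            if_neg (fun hv => h05 hv.1.2.1)
      · exact Finset.sum_eq_zero fun v5 _ => Finset.sum_eq_zero fun v3 _ =>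
          Finset.sum_eq_zero fun v4 _ => if_neg (fun hv => h12 hv.1.2.2.1)
    · exact Finset.sum_eq_zero fun v2 _ => Finset.sum_eq_zero fun v5 _ =>
        Finset.sum_eq_zero fun v3 _ => Finset.sum_eq_zero fun v4 _ =>
          if_neg (fun hv => h01 hv.1.1)
  -- bad set 3 : v4 coincides with v0, v1, v2 or v5
  have hB3 : cnt6 (fun v0 v1 v2 v3 v4 v5 =>
        FrameP H G v0 v1 v2 v3 v4 v5 ∧ (v4 = v0 ∨ v4 = v1 ∨ v4 = v2 ∨ v4 = v5)) ≤
      SA * (d * (d * (4 * (d * 1)))) := by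
    simp only [cnt6]
    rw [Finset.sum_congr rfl fun v0 _ => Finset.sum_congr rfl fun v1 _ =>
      Finset.sum_congr rfl fun v2 _ => rev3 _]
    refine steppair_le hSAsum (fun v0 v1 h01 => ?_) (fun v0 v1 h01 => ?_)
    · refine stepone_le (cG v1).le (fun v2 h12 => ?_) (fun v2 h12 => ?_)
      · refine stepone_le (cG v0).le (fun v5 h05 => ?_) (fun v5 h05 => ?_)
        · refine stepone_le (fcard_mem4_le v0 v1 v2 v5) (fun v4 h4m => ?_)
            (fun v4 h4m => ?_)
          · refine stepone_le (cG' v4).le (fun v3 h34 => ?_) (fun v3 h34 => ?_)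
            · split_ifs <;> omega
            · exact if_neg (fun hv => h34 hv.1.2.2.2)
          · exact Finset.sum_eq_zero fun v3 _ => if_neg (fun hv => h4m hv.2)
        · exact Finset.sum_eq_zero fun v4 _ => Finset.sum_eq_zero fun v3 _ =>
            if_neg (fun hv => h05 hv.1.2.1)
      · exact Finset.sum_eq_zero fun v5 _ => Finset.sum_eq_zero fun v4 _ =>
          Finset.sum_eq_zero fun v3 _ => if_neg (fun hv => h12 hv.1.2.2.1)
    · exact Finset.sum_eq_zero fun v2 _ => Finset.sum_eq_zero fun v5 _ =>
        Finset.sum_eq_zero fun v4 _ => Finset.sum_eq_zero fun v3 _ =>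
          if_neg (fun hv => h01 hv.1.1)
  -- bad set 4 : v2v3 is an edge of G
  have hB4 : cnt6 (fun v0 v1 v2 v3 v4 v5 =>
        FrameP H G v0 v1 v2 v3 v4 v5 ∧ G.Adj v2 v3) ≤
      (2 * Hᶜ.edgeSet.ncard) * (d * (d * (d * (d * 1)))) := by
    simp only [cnt6]
    refine steppair_le sH (fun v0 v1 h01 => ?_) (fun v0 v1 h01 => ?_)
    · refine stepone_le (cG v1).le (fun v2 h12 => ?_) (fun v2 h12 => ?_)
      · refine stepone_le (cG v2).le (fun v3 h23 => ?_) (fun v3 h23 => ?_)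
        · refine stepone_le (cG v3).le (fun v4 h34 => ?_) (fun v4 h34 => ?_)
          · refine stepone_le (cG v0).le (fun v5 h05 => ?_) (fun v5 h05 => ?_)
            · split_ifs <;> omega
            · exact if_neg (fun hv => h05 hv.1.2.1)
          · exact Finset.sum_eq_zero fun v5 _ => if_neg (fun hv => h34 hv.1.2.2.2)
        · exact Finset.sum_eq_zero fun v4 _ => Finset.sum_eq_zero fun v5 _ =>
            if_neg (fun hv => h23 hv.2)
      · exact Finset.sum_eq_zero fun v3 _ => Finset.sum_eq_zero fun v4 _ =>
          Finset.sum_eq_zero fun v5 _ => if_neg (fun hv => h12 hv.1.2.2.1)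
    · exact Finset.sum_eq_zero fun v2 _ => Finset.sum_eq_zero fun v3 _ =>
        Finset.sum_eq_zero fun v4 _ => Finset.sum_eq_zero fun v5 _ =>
          if_neg (fun hv => h01 ((SimpleGraph.sdiff_adj _ _ _ _).mp hv.1.1).1)
  -- bad set 5 : v2v3 is a red pair
  have hB5 : cnt6 (fun v0 v1 v2 v3 v4 v5 =>
        FrameP H G v0 v1 v2 v3 v4 v5 ∧ Hᶜ.Adj v2 v3) ≤
      (2 * Hᶜ.edgeSet.ncard) * (d * (Hᶜ.maxDegree * (d * (d * 1)))) := by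
    simp only [cnt6]
    refine steppair_le sH (fun v0 v1 h01 => ?_) (fun v0 v1 h01 => ?_)
    · refine stepone_le (cG v1).le (fun v2 h12 => ?_) (fun v2 h12 => ?_)
      · refine stepone_le (cH v2) (fun v3 h23 => ?_) (fun v3 h23 => ?_)
        · refine stepone_le (cG v3).le (fun v4 h34 => ?_) (fun v4 h34 => ?_)
          · refine stepone_le (cG v0).le (fun v5 h05 => ?_) (fun v5 h05 => ?_)
            · split_ifs <;> omega
            · exact if_neg (fun hv => h05 hv.1.2.1)
          · exact Finset.sum_eq_zero fun v5 _ => if_neg (fun hv => h34 hv.1.2.2.2)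
        · exact Finset.sum_eq_zero fun v4 _ => Finset.sum_eq_zero fun v5 _ =>
            if_neg (fun hv => h23 hv.2)
      · exact Finset.sum_eq_zero fun v3 _ => Finset.sum_eq_zero fun v4 _ =>
          Finset.sum_eq_zero fun v5 _ => if_neg (fun hv => h12 hv.1.2.2.1)
    · exact Finset.sum_eq_zero fun v2 _ => Finset.sum_eq_zero fun v3 _ =>
        Finset.sum_eq_zero fun v4 _ => Finset.sum_eq_zero fun v5 _ =>
          if_neg (fun hv => h01 ((SimpleGraph.sdiff_adj _ _ _ _).mp hv.1.1).1)
  -- bad set 6 : v4v5 is an edge of G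
  have hB6 : cnt6 (fun v0 v1 v2 v3 v4 v5 =>
        FrameP H G v0 v1 v2 v3 v4 v5 ∧ G.Adj v4 v5) ≤
      (2 * Hᶜ.edgeSet.ncard) * (d * (d * (d * (d * 1)))) := by
    simp only [cnt6]
    rw [Finset.sum_congr rfl fun v0 _ => Finset.sum_congr rfl fun v1 _ =>
      Finset.sum_congr rfl fun v2 _ => rev3 _]
    refine steppair_le sH (fun v0 v1 h01 => ?_) (fun v0 v1 h01 => ?_)
    · refine stepone_le (cG v1).le (fun v2 h12 => ?_) (fun v2 h12 => ?_)
      · refine stepone_le (cG v0).le (fun v5 h05 => ?_) (fun v5 h05 => ?_)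
        · refine stepone_le (cG' v5).le (fun v4 h45 => ?_) (fun v4 h45 => ?_)
          · refine stepone_le (cG' v4).le (fun v3 h34 => ?_) (fun v3 h34 => ?_)
            · split_ifs <;> omega
            · exact if_neg (fun hv => h34 hv.1.2.2.2)
          · exact Finset.sum_eq_zero fun v3 _ => if_neg (fun hv => h45 hv.2)
        · exact Finset.sum_eq_zero fun v4 _ => Finset.sum_eq_zero fun v3 _ =>
            if_neg (fun hv => h05 hv.1.2.1)
      · exact Finset.sum_eq_zero fun v5 _ => Finset.sum_eq_zero fun v4 _ =>
          Finset.sum_eq_zero fun v3 _ => if_neg (fun hv => h12 hv.1.2.2.1)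
    · exact Finset.sum_eq_zero fun v2 _ => Finset.sum_eq_zero fun v5 _ =>
        Finset.sum_eq_zero fun v4 _ => Finset.sum_eq_zero fun v3 _ =>
          if_neg (fun hv => h01 ((SimpleGraph.sdiff_adj _ _ _ _).mp hv.1.1).1)
  -- bad set 7 : v4v5 is a red pair
  have hB7 : cnt6 (fun v0 v1 v2 v3 v4 v5 =>
        FrameP H G v0 v1 v2 v3 v4 v5 ∧ Hᶜ.Adj v4 v5) ≤
      (2 * Hᶜ.edgeSet.ncard) * (d * (d * (Hᶜ.maxDegree * (d * 1)))) := by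
    simp only [cnt6]
    rw [Finset.sum_congr rfl fun v0 _ => Finset.sum_congr rfl fun v1 _ =>
      Finset.sum_congr rfl fun v2 _ => rev3 _]
    refine steppair_le sH (fun v0 v1 h01 => ?_) (fun v0 v1 h01 => ?_)
    · refine stepone_le (cG v1).le (fun v2 h12 => ?_) (fun v2 h12 => ?_)
      · refine stepone_le (cG v0).le (fun v5 h05 => ?_) (fun v5 h05 => ?_)
        · refine stepone_le (cH' v5) (fun v4 h45 => ?_) (fun v4 h45 => ?_)
          · refine stepone_le (cG' v4).le (fun v3 h34 => ?_) (fun v3 h34 => ?_)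
            · split_ifs <;> omega
            · exact if_neg (fun hv => h34 hv.1.2.2.2)
          · exact Finset.sum_eq_zero fun v3 _ => if_neg (fun hv => h45 hv.2)
        · exact Finset.sum_eq_zero fun v4 _ => Finset.sum_eq_zero fun v3 _ =>
            if_neg (fun hv => h05 hv.1.2.1)
      · exact Finset.sum_eq_zero fun v5 _ => Finset.sum_eq_zero fun v4 _ =>
          Finset.sum_eq_zero fun v3 _ => if_neg (fun hv => h12 hv.1.2.2.1)
    · exact Finset.sum_eq_zero fun v2 _ => Finset.sum_eq_zero fun v5 _ =>
        Finset.sum_eq_zero fun v4 _ => Finset.sum_eq_zero fun v3 _ =>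
          if_neg (fun hv => h01 ((SimpleGraph.sdiff_adj _ _ _ _).mp hv.1.1).1)
  -- bad set 8 : v0v5 is a red edge of G
  have hB8 : cnt6 (fun v0 v1 v2 v3 v4 v5 =>
        FrameP H G v0 v1 v2 v3 v4 v5 ∧ (G ⊓ Hᶜ).Adj v0 v5) ≤
      (2 * i) * (Hᶜ.maxDegree * (d * (Fintype.card (Fin n) * (d * 1)))) := by
    simp only [cnt6]
    rw [Finset.sum_congr rfl fun v0 _ => mf5 _]
    refine steppair_le sR (fun v0 v5 h05 => ?_) (fun v0 v5 h05 => ?_)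
    · refine stepone_le (cH v0) (fun v1 h01 => ?_) (fun v1 h01 => ?_)
      · refine stepone_le (cG v1).le (fun v2 h12 => ?_) (fun v2 h12 => ?_)
        · refine stepfree_le (fun v3 => ?_)
          refine stepone_le (cG v3).le (fun v4 h34 => ?_) (fun v4 h34 => ?_)
          · split_ifs <;> omega
          · exact if_neg (fun hv => h34 hv.1.2.2.2)
        · exact Finset.sum_eq_zero fun v3 _ => Finset.sum_eq_zero fun v4 _ =>
            if_neg (fun hv => h12 hv.1.2.2.1)
      · exact Finset.sum_eq_zero fun v2 _ => Finset.sum_eq_zero fun v3 _ =>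
          Finset.sum_eq_zero fun v4 _ =>
            if_neg (fun hv => (by
              have h := hv.1.1
              rw [SimpleGraph.sdiff_adj] at h
              exact h01 h.1 : False))
    · exact Finset.sum_eq_zero fun v1 _ => Finset.sum_eq_zero fun v2 _ =>
        Finset.sum_eq_zero fun v3 _ => Finset.sum_eq_zero fun v4 _ =>
          if_neg (fun hv => h05 hv.2)
  -- bad set 9 : v1v2 is a red edge of G
  have hB9 : cnt6 (fun v0 v1 v2 v3 v4 v5 =>
        FrameP H G v0 v1 v2 v3 v4 v5 ∧ (G ⊓ Hᶜ).Adj v1 v2) ≤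
      (2 * i) * (Hᶜ.maxDegree * (Fintype.card (Fin n) * (d * (d * 1)))) := by
    simp only [cnt6]
    rw [rot3 _]
    refine steppair_le sR (fun v1 v2 h12 => ?_) (fun v1 v2 h12 => ?_)
    · refine stepone_le (cH' v1) (fun v0 h01 => ?_) (fun v0 h01 => ?_)
      · refine stepfree_le (fun v3 => ?_)
        refine stepone_le (cG v3).le (fun v4 h34 => ?_) (fun v4 h34 => ?_)
        · refine stepone_le (cG v0).le (fun v5 h05 => ?_) (fun v5 h05 => ?_)
          · split_ifs <;> omega
          · exact if_neg (fun hv => h05 hv.1.2.1)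
        · exact Finset.sum_eq_zero fun v5 _ => if_neg (fun hv => h34 hv.1.2.2.2)
      · exact Finset.sum_eq_zero fun v3 _ => Finset.sum_eq_zero fun v4 _ =>
          Finset.sum_eq_zero fun v5 _ =>
            if_neg (fun hv => (by
              have h := hv.1.1
              rw [SimpleGraph.sdiff_adj] at h
              exact h01 h.1 : False))
    · exact Finset.sum_eq_zero fun v0 _ => Finset.sum_eq_zero fun v3 _ =>
        Finset.sum_eq_zero fun v4 _ => Finset.sum_eq_zero fun v5 _ =>
          if_neg (fun hv => h12 hv.2)
  -- glue : frame count is at most valid count plus all bad counts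
  have hglue : cnt6 (FrameP H G) ≤ cnt6 (Valid3Inverse H G)
      + cnt6 (fun v0 v1 v2 v3 v4 v5 => FrameP H G v0 v1 v2 v3 v4 v5 ∧ (G ⊓ Hᶜ).Adj v3 v4)
      + cnt6 (fun v0 v1 v2 v3 v4 v5 => FrameP H G v0 v1 v2 v3 v4 v5 ∧
          (v3 = v0 ∨ v3 = v1 ∨ v3 = v2 ∨ v3 = v5))
      + cnt6 (fun v0 v1 v2 v3 v4 v5 => FrameP H G v0 v1 v2 v3 v4 v5 ∧
          (v4 = v0 ∨ v4 = v1 ∨ v4 = v2 ∨ v4 = v5))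
      + cnt6 (fun v0 v1 v2 v3 v4 v5 => FrameP H G v0 v1 v2 v3 v4 v5 ∧ G.Adj v2 v3)
      + cnt6 (fun v0 v1 v2 v3 v4 v5 => FrameP H G v0 v1 v2 v3 v4 v5 ∧ Hᶜ.Adj v2 v3)
      + cnt6 (fun v0 v1 v2 v3 v4 v5 => FrameP H G v0 v1 v2 v3 v4 v5 ∧ G.Adj v4 v5)
      + cnt6 (fun v0 v1 v2 v3 v4 v5 => FrameP H G v0 v1 v2 v3 v4 v5 ∧ Hᶜ.Adj v4 v5)
      + cnt6 (fun v0 v1 v2 v3 v4 v5 => FrameP H G v0 v1 v2 v3 v4 v5 ∧ (G ⊓ Hᶜ).Adj v0 v5)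
      + cnt6 (fun v0 v1 v2 v3 v4 v5 => FrameP H G v0 v1 v2 v3 v4 v5 ∧ (G ⊓ Hᶜ).Adj v1 v2) := by
    simp only [cnt6, ← Finset.sum_add_distrib]
    refine Finset.sum_le_sum fun v0 _ => Finset.sum_le_sum fun v1 _ =>
      Finset.sum_le_sum fun v2 _ => Finset.sum_le_sum fun v3 _ =>
      Finset.sum_le_sum fun v4 _ => Finset.sum_le_sum fun v5 _ => ?_
    by_cases hf : FrameP H G v0 v1 v2 v3 v4 v5
    · rcases cover H G v0 v1 v2 v3 v4 v5 hf with h|h|h|h|h|h|h|h|h|h <;>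
        rw [if_pos hf, if_pos h] <;> omega
    · simp [hf]
  -- final arithmetic
  simp only [Fintype.card_fin] at hupper hframe hB8 hB9
  rw [b3_eq' H G]
  have hSAz : (SA : ℤ) = 2 * (Hᶜ.edgeSet.ncard : ℤ) - 2 * i := by omega
  have c0 : (cnt6 (FrameP H G) : ℤ) ≤ (cnt6 (Valid3Inverse H G) : ℤ)
      + cnt6 (fun v0 v1 v2 v3 v4 v5 => FrameP H G v0 v1 v2 v3 v4 v5 ∧ (G ⊓ Hᶜ).Adj v3 v4)
      + cnt6 (fun v0 v1 v2 v3 v4 v5 => FrameP H G v0 v1 v2 v3 v4 v5 ∧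
          (v3 = v0 ∨ v3 = v1 ∨ v3 = v2 ∨ v3 = v5))
      + cnt6 (fun v0 v1 v2 v3 v4 v5 => FrameP H G v0 v1 v2 v3 v4 v5 ∧
          (v4 = v0 ∨ v4 = v1 ∨ v4 = v2 ∨ v4 = v5))
      + cnt6 (fun v0 v1 v2 v3 v4 v5 => FrameP H G v0 v1 v2 v3 v4 v5 ∧ G.Adj v2 v3)
      + cnt6 (fun v0 v1 v2 v3 v4 v5 => FrameP H G v0 v1 v2 v3 v4 v5 ∧ Hᶜ.Adj v2 v3)
      + cnt6 (fun v0 v1 v2 v3 v4 v5 => FrameP H G v0 v1 v2 v3 v4 v5 ∧ G.Adj v4 v5)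
      + cnt6 (fun v0 v1 v2 v3 v4 v5 => FrameP H G v0 v1 v2 v3 v4 v5 ∧ Hᶜ.Adj v4 v5)
      + cnt6 (fun v0 v1 v2 v3 v4 v5 => FrameP H G v0 v1 v2 v3 v4 v5 ∧ (G ⊓ Hᶜ).Adj v0 v5)
      + cnt6 (fun v0 v1 v2 v3 v4 v5 => FrameP H G v0 v1 v2 v3 v4 v5 ∧ (G ⊓ Hᶜ).Adj v1 v2) := by
    exact_mod_cast hglue
  have cf : (cnt6 (FrameP H G) : ℤ) = (SA : ℤ) * (d * (n * (d * (d * 1)))) := by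
    exact_mod_cast hframe
  have z1 : (cnt6 (fun v0 v1 v2 v3 v4 v5 =>
        FrameP H G v0 v1 v2 v3 v4 v5 ∧ (G ⊓ Hᶜ).Adj v3 v4) : ℤ) ≤
      (SA : ℤ) * (d * ((2 * i) * (d * 1))) := by exact_mod_cast hB1
  have z2 : (cnt6 (fun v0 v1 v2 v3 v4 v5 =>
        FrameP H G v0 v1 v2 v3 v4 v5 ∧ (v3 = v0 ∨ v3 = v1 ∨ v3 = v2 ∨ v3 = v5)) : ℤ) ≤
      (SA : ℤ) * (d * (d * (4 * (d * 1)))) := by exact_mod_cast hB2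
  have z3 : (cnt6 (fun v0 v1 v2 v3 v4 v5 =>
        FrameP H G v0 v1 v2 v3 v4 v5 ∧ (v4 = v0 ∨ v4 = v1 ∨ v4 = v2 ∨ v4 = v5)) : ℤ) ≤
      (SA : ℤ) * (d * (d * (4 * (d * 1)))) := by exact_mod_cast hB3
  have z4 : (cnt6 (fun v0 v1 v2 v3 v4 v5 =>
        FrameP H G v0 v1 v2 v3 v4 v5 ∧ G.Adj v2 v3) : ℤ) ≤
      (2 * (Hᶜ.edgeSet.ncard : ℤ)) * (d * (d * (d * (d * 1)))) := by exact_mod_cast hB4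
  have z5 : (cnt6 (fun v0 v1 v2 v3 v4 v5 =>
        FrameP H G v0 v1 v2 v3 v4 v5 ∧ Hᶜ.Adj v2 v3) : ℤ) ≤
      (2 * (Hᶜ.edgeSet.ncard : ℤ)) * (d * ((Hᶜ.maxDegree : ℤ) * (d * (d * 1)))) := by
    exact_mod_cast hB5
  have z6 : (cnt6 (fun v0 v1 v2 v3 v4 v5 =>
        FrameP H G v0 v1 v2 v3 v4 v5 ∧ G.Adj v4 v5) : ℤ) ≤
      (2 * (Hᶜ.edgeSet.ncard : ℤ)) * (d * (d * (d * (d * 1)))) := by exact_mod_cast hB6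
  have z7 : (cnt6 (fun v0 v1 v2 v3 v4 v5 =>
        FrameP H G v0 v1 v2 v3 v4 v5 ∧ Hᶜ.Adj v4 v5) : ℤ) ≤
      (2 * (Hᶜ.edgeSet.ncard : ℤ)) * (d * (d * ((Hᶜ.maxDegree : ℤ) * (d * 1)))) := by
    exact_mod_cast hB7
  have z8 : (cnt6 (fun v0 v1 v2 v3 v4 v5 =>
        FrameP H G v0 v1 v2 v3 v4 v5 ∧ (G ⊓ Hᶜ).Adj v0 v5) : ℤ) ≤
      (2 * (i : ℤ)) * ((Hᶜ.maxDegree : ℤ) * (d * (n * (d * 1)))) := by exact_mod_cast hB8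
  have z9 : (cnt6 (fun v0 v1 v2 v3 v4 v5 =>
        FrameP H G v0 v1 v2 v3 v4 v5 ∧ (G ⊓ Hᶜ).Adj v1 v2) : ℤ) ≤
      (2 * (i : ℤ)) * ((Hᶜ.maxDegree : ℤ) * (n * (d * (d * 1)))) := by exact_mod_cast hB9
  constructor
  · -- lower bound
    have hid : ((2 * Hᶜ.edgeSet.ncard - 2 * i) * d ^ 2 * (d * n - 2 * i - 8 * d)
        - 4 * Hᶜ.edgeSet.ncard * d ^ 3 * (d + Hᶜ.maxDegree)
        - 4 * i * Hᶜ.maxDegree * d ^ 2 * n : ℤ)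
        = (SA : ℤ) * (d * (n * (d * (d * 1))))
          - ((SA : ℤ) * (d * ((2 * i) * (d * 1)))
            + (SA : ℤ) * (d * (d * (4 * (d * 1))))
            + (SA : ℤ) * (d * (d * (4 * (d * 1))))
            + (2 * (Hᶜ.edgeSet.ncard : ℤ)) * (d * (d * (d * (d * 1))))
            + (2 * (Hᶜ.edgeSet.ncard : ℤ)) * (d * ((Hᶜ.maxDegree : ℤ) * (d * (d * 1))))
            + (2 * (Hᶜ.edgeSet.ncard : ℤ)) * (d * (d * (d * (d * 1))))
            + (2 * (Hᶜ.edgeSet.ncard : ℤ)) * (d * (d * ((Hᶜ.maxDegree : ℤ) * (d * 1))))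
            + (2 * (i : ℤ)) * ((Hᶜ.maxDegree : ℤ) * (d * (n * (d * 1))))
            + (2 * (i : ℤ)) * ((Hᶜ.maxDegree : ℤ) * (n * (d * (d * 1))))) := by
      rw [hSAz]; ring
    linarith [c0, cf, z1, z2, z3, z4, z5, z6, z7, z8, z9, hid.le, hid.ge]
  · -- upper bound
    have zu : (cnt6 (Valid3Inverse H G) : ℤ) ≤
        (2 * (Hᶜ.edgeSet.ncard : ℤ)) * (d * (n * (d * (d * 1)))) := by exact_mod_cast hupper
    have hid2 : ((2 * (Hᶜ.edgeSet.ncard : ℤ)) * (d * (n * (d * (d * 1)))))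
        = 2 * Hᶜ.edgeSet.ncard * d ^ 3 * n := by ring
    linarith [zu, hid2.le, hid2.ge]
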